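/- Let s > 0, c₀ > 0, N_p > 0, γ₀ > 0 and u_b ∈ (0, 1] be real constants. Define β(u) = γ₀ u²/u_b², σ²(u) = s + (c₀/N_p)·(1 + 1/β(u))², and f(u) = ln(σ²(u)) + 2 ln u for u > 0. Set x* = 1 + √(1 + N_p·s/c₀), β* = 1/(x* − 1), and u* = u_b·√(β*/γ₀). Then u* > 0 and f has derivative zero at u*, i.e. u* is a critical point of f. -/

import Mathlib

open Real

/-- Sensing-optimal elevation (Lemma: sweet spot): with
`β(u) = γ₀ u²/u_b²`, `σ²(u) = s + (c₀/N_p)(1 + 1/β(u))²` and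
`f(u) = ln σ²(u) + 2 ln u`, the point
`u* = u_b √(β*/γ₀)` with `β* = 1/(x* - 1)`, `x* = 1 + √(1 + N_p s/c₀)`
is positive and is a critical point of `f`. -/
theorem sensing_optimal_elevation
    (s c₀ Np γ₀ ub : ℝ) (hs : 0 < s) (hc₀ : 0 < c₀) (hNp : 0 < Np)
    (hγ₀ : 0 < γ₀) (hub0 : 0 < ub) (hub1 : ub ≤ 1) :
    let β : ℝ → ℝ := fun u => γ₀ * u ^ 2 / ub ^ 2
    let σsq : ℝ → ℝ := fun u => s + (c₀ / Np) * (1 + 1 / β u) ^ 2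
    let f : ℝ → ℝ := fun u => Real.log (σsq u) + 2 * Real.log u
    let xstar : ℝ := 1 + Real.sqrt (1 + Np * s / c₀)
    let βstar : ℝ := 1 / (xstar - 1)
    let ustar : ℝ := ub * Real.sqrt (βstar / γ₀)
    0 < ustar ∧ HasDerivAt f 0 ustar := by
  intro β σsq f xstar βstar ustar
  have hTpos : (0:ℝ) < Real.sqrt (1 + Np * s / c₀) :=
    Real.sqrt_pos.mpr (by positivity)
  set T := Real.sqrt (1 + Np * s / c₀) with hTdef
  have hT2 : T ^ 2 = 1 + Np * s / c₀ := Real.sq_sqrt (by positivity)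
  have hTne : T ≠ 0 := ne_of_gt hTpos
  have hβstar : βstar = 1 / T := by
    have h1 : xstar - 1 = T := by simp only [xstar]; ring
    simp only [βstar, h1]
  have hbpos : 0 < βstar / γ₀ := by rw [hβstar]; positivity
  have hu_pos : 0 < ustar := mul_pos hub0 (Real.sqrt_pos.mpr hbpos)
  have hune : ustar ≠ 0 := ne_of_gt hu_pos
  have hu2 : ustar ^ 2 = ub ^ 2 * (1 / (T * γ₀)) := by
    have : ustar ^ 2 = ub ^ 2 * (βstar / γ₀) := by
      simp [ustar, mul_pow, Real.sq_sqrt hbpos.le]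
    rw [this, hβstar]; ring
  have hβu : β ustar = 1 / T := by
    simp only [β]
    rw [hu2]
    field_simp
  have hβune : β ustar ≠ 0 := by rw [hβu]; positivity
  have hσval : σsq ustar = s + (c₀ / Np) * (1 + T) ^ 2 := by
    simp only [σsq, hβu]
    rw [one_div_one_div]
  have hσpos : 0 < σsq ustar := by rw [hσval]; positivity
  have hσne : σsq ustar ≠ 0 := ne_of_gt hσpos
  refine ⟨hu_pos, ?_⟩
  -- derivative of β
  have hβ' : HasDerivAt β (γ₀ * (2 * ustar ^ 1) / ub ^ 2) ustar := by
    exact ((hasDerivAt_pow 2 ustar).const_mul γ₀).div_const (ub ^ 2)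
  -- rewrite σsq with inverse
  have hσeq : σsq = fun v => s + (c₀ / Np) * (1 + (β v)⁻¹) ^ 2 := by
    funext v; simp [σsq, one_div]
  have hinv : HasDerivAt (fun v => (β v)⁻¹)
      (-(γ₀ * (2 * ustar ^ 1) / ub ^ 2) / (β ustar) ^ 2) ustar := hβ'.inv hβune
  have hσ' : HasDerivAt σsq
      ((c₀ / Np) * ((2 : ℕ) * (1 + (β ustar)⁻¹) ^ 1 *
        (-(γ₀ * (2 * ustar ^ 1) / ub ^ 2) / (β ustar) ^ 2))) ustar := by
    rw [hσeq]
    exact (((hinv.const_add 1).pow 2).const_mul (c₀ / Np)).const_add s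
  have hlog : HasDerivAt (fun v => Real.log (σsq v))
      (((c₀ / Np) * ((2 : ℕ) * (1 + (β ustar)⁻¹) ^ 1 *
        (-(γ₀ * (2 * ustar ^ 1) / ub ^ 2) / (β ustar) ^ 2))) / σsq ustar) ustar :=
    hσ'.log hσne
  have hlogu : HasDerivAt (fun v => 2 * Real.log v) (2 * ustar⁻¹) ustar :=
    (Real.hasDerivAt_log hune).const_mul 2
  have hf := hlog.add hlogu
  have hzero : (((c₀ / Np) * ((2 : ℕ) * (1 + (β ustar)⁻¹) ^ 1 *
        (-(γ₀ * (2 * ustar ^ 1) / ub ^ 2) / (β ustar) ^ 2))) / σsq ustar)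
        + 2 * ustar⁻¹ = 0 := by
    rw [hβu, hσval]
    have hubne : ub ≠ 0 := ne_of_gt hub0
    have hγne : γ₀ ≠ 0 := ne_of_gt hγ₀
    have hNne : Np ≠ 0 := ne_of_gt hNp
    have hcne : c₀ ≠ 0 := ne_of_gt hc₀
    have hσne' : s + (c₀ / Np) * (1 + T) ^ 2 ≠ 0 := by positivity
    have hu2' : ustar ^ 2 * (T * γ₀) = ub ^ 2 := by
      rw [hu2]; field_simp
    have hT2' : T ^ 2 * c₀ = c₀ + Np * s := by
      rw [hT2]; field_simp
    field_simp
    linear_combination (-4*c₀*T*(1+T)) * (hu2' : (ub * √(βstar / γ₀)) ^ 2 * (T * γ₀) = ub ^ 2) + (-2*ub^2) * hT2'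
  rw [← hzero]
  exact hf
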